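/- Let G be a finite directed graph with node set V and arc set A ⊆ V × V, let s, t ∈ V be distinct, and let π_min ≤ π_max be real potential bounds. Let β, β' : A → ℝ with 0 < β_a ≤ β'_a for all a ∈ A. Then the supremum, over all potential vectors π : V → ℝ with π_min ≤ π_v ≤ π_max for all v whose induced stationary gas flow (with resistances β') is an s-t-flow, of the flow value, is at most the corresponding supremum taken with resistances β. In other words, the value of a maximal feasible stationary gas s-t-flow cannot be increased by increasing the arc resistances. -/

import Mathlib

open Finset

/-- The stationary gas flow induced by node potentials `π` and resistances `β`
(Weymouth's equation). -/
noncomputable def inducedFlow {V : Type*} (β : V × V → ℝ) (π : V → ℝ) (a : V × V) : ℝ :=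
  Real.sign (π a.1 - π a.2) * Real.sqrt (|π a.1 - π a.2| / β a)

/-- The set of values of feasible stationary gas s-t-flows for resistances `β`
and potential interval `[πmin, πmax]`. -/
def stFlowValues {V : Type*} [Fintype V] [DecidableEq V] (A : Finset (V × V))
    (β : V × V → ℝ) (s t : V) (πmin πmax : ℝ) : Set ℝ :=
  {q : ℝ | ∃ π : V → ℝ, (∀ v : V, πmin ≤ π v ∧ π v ≤ πmax) ∧
    ∀ v : V,
      (∑ a ∈ A.filter (fun a => a.1 = v), inducedFlow β π a) -
        (∑ a ∈ A.filter (fun a => a.2 = v), inducedFlow β π a) =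
          if v = s then q else if v = t then -q else 0}


/-! ### Auxiliary lemmas for the Calvert–Keady monotonicity theorem -/

section CalvertKeadyAux

open Filter

/-- Derivative of `u ↦ |u|^{3/2}`. -/
lemma hasDerivAt_psiCK (u : ℝ) :
    HasDerivAt (fun x : ℝ => |x| * Real.sqrt |x|)
      ((3/2) * (Real.sign u * Real.sqrt |u|)) u := by
  rcases lt_trichotomy u 0 with hu | hu | hu
  · have h1 : HasDerivAt (fun x : ℝ => -x * Real.sqrt (-x))
        (-(3/2) * Real.sqrt (-u)) u := by
      have hs : HasDerivAt (fun x : ℝ => Real.sqrt (-x)) (-(1 / (2 * Real.sqrt (-u)))) u := by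
        have := (Real.hasDerivAt_sqrt (x := -u) (by linarith)).comp u (hasDerivAt_neg u)
        simpa [Function.comp_def] using this
      have hm := ((hasDerivAt_neg u)).mul hs
      refine hm.congr_deriv ?_
      have h0 : Real.sqrt (-u) > 0 := Real.sqrt_pos.2 (by linarith)
      have hss : Real.sqrt (-u) * Real.sqrt (-u) = -u := Real.mul_self_sqrt (by linarith)
      field_simp
      nlinarith [hss]
    have heq : (fun x : ℝ => |x| * Real.sqrt |x|) =ᶠ[nhds u] fun x => -x * Real.sqrt (-x) := by
      filter_upwards [Iio_mem_nhds hu] with x hx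
      rw [abs_of_neg hx]
    rw [Real.sign_of_neg hu, abs_of_neg hu]
    have h2 := h1.congr_of_eventuallyEq heq
    refine h2.congr_deriv ?_; ring
  · subst hu
    simp only [Real.sign_zero, abs_zero, Real.sqrt_zero, mul_zero, zero_mul]
    rw [hasDerivAt_iff_tendsto_slope]
    refine squeeze_zero_norm' (a := fun x => Real.sqrt |x|) ?_ ?_
    · filter_upwards [self_mem_nhdsWithin] with x (hx : x ≠ 0)
      rw [slope_def_field]
      simp only [abs_zero, Real.sqrt_zero, mul_zero, sub_zero]
      rw [Real.norm_eq_abs, abs_div, abs_mul, abs_abs, abs_of_nonneg (Real.sqrt_nonneg _)]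
      rw [mul_comm, mul_div_assoc, div_self (abs_ne_zero.2 hx), mul_one]
    · have : Filter.Tendsto (fun x : ℝ => Real.sqrt |x|) (nhds 0) (nhds 0) := by
        have := (Real.continuous_sqrt.comp continuous_abs).tendsto (0:ℝ)
        simpa [Function.comp_def] using this
      exact this.mono_left nhdsWithin_le_nhds
  · have h1 : HasDerivAt (fun x : ℝ => x * Real.sqrt x) ((3/2) * Real.sqrt u) u := by
      have hm := (hasDerivAt_id u).mul (Real.hasDerivAt_sqrt (ne_of_gt hu))
      refine hm.congr_deriv ?_
      have h0 : Real.sqrt u > 0 := Real.sqrt_pos.2 hu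
      have hss : Real.sqrt u * Real.sqrt u = u := Real.mul_self_sqrt hu.le
      field_simp
      nlinarith [hss, (id_eq u : id u = u)]
    have heq : (fun x : ℝ => |x| * Real.sqrt |x|) =ᶠ[nhds u] fun x => x * Real.sqrt x := by
      filter_upwards [Ioi_mem_nhds hu] with x hx
      rw [abs_of_pos hx]
    rw [Real.sign_of_pos hu, abs_of_pos hu]
    have h2 := h1.congr_of_eventuallyEq heq
    refine h2.congr_deriv ?_; ring

/-- Young-type inequality: `Y·A ≤ (2/3)·A^{3/2} + (1/3)·Y³`. -/
lemma young3CK {A Y : ℝ} (hA : 0 ≤ A) (hY : 0 ≤ Y) :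
    Y * A ≤ (2/3) * (A * Real.sqrt A) + (1/3) * Y^3 := by
  set u := Real.sqrt A with hu
  have hu0 : 0 ≤ u := Real.sqrt_nonneg A
  have hA' : A = u^2 := (Real.sq_sqrt hA).symm
  rw [hA']
  nlinarith [mul_nonneg (sq_nonneg (u - Y)) (by positivity : (0:ℝ) ≤ 2*u + Y)]

/-- Weighted Young-type inequality. -/
lemma young3CK' {X A b bb : ℝ} (hX : 0 ≤ X) (hA : 0 ≤ A) (hb : 0 < b) (hbb : b ≤ bb) :
    X * A ≤ (2/3) * (A * Real.sqrt A / Real.sqrt b) + (1/3) * (bb * X^3) := by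
  have hsb : 0 < Real.sqrt b := Real.sqrt_pos.2 hb
  have h3 := young3CK hA (mul_nonneg hX hsb.le)
  have hsq : Real.sqrt b ^ 2 = b := Real.sq_sqrt hb.le
  have hX3 : 0 ≤ X^3 := by positivity
  have key : X * A * Real.sqrt b ≤
      ((2/3) * (A * Real.sqrt A / Real.sqrt b) + (1/3) * (bb * X^3)) * Real.sqrt b := by
    have e1 : (2/3) * (A * Real.sqrt A / Real.sqrt b) * Real.sqrt b
        = (2/3) * (A * Real.sqrt A) := by
      field_simp
    have e2 : (X * Real.sqrt b)^3 = X^3 * b * Real.sqrt b := by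
      rw [mul_pow, pow_succ (Real.sqrt b) 2, hsq]; ring
    have e3 : (1/3 : ℝ) * (bb * X^3) * Real.sqrt b = (1/3) * (bb * (X^3 * Real.sqrt b)) := by
      ring
    have hmono : (1/3 : ℝ) * (b * (X^3 * Real.sqrt b)) ≤ (1/3) * (bb * (X^3 * Real.sqrt b)) := by
      have : 0 ≤ X^3 * Real.sqrt b := by positivity
      nlinarith
    calc X * A * Real.sqrt b = X * Real.sqrt b * A := by ring
      _ ≤ (2/3) * (A * Real.sqrt A) + (1/3) * (X * Real.sqrt b)^3 := h3
      _ = (2/3) * (A * Real.sqrt A) + (1/3) * (b * (X^3 * Real.sqrt b)) := by rw [e2]; ring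
      _ ≤ (2/3) * (A * Real.sqrt A) + (1/3) * (bb * (X^3 * Real.sqrt b)) := by linarith
      _ = ((2/3) * (A * Real.sqrt A / Real.sqrt b) + (1/3) * (bb * X^3)) * Real.sqrt b := by
          rw [add_mul, e1, e3]
  exact le_of_mul_le_mul_right key hsb

lemma deriv_nonpos_of_min_leftCK {g : ℝ → ℝ} {d l : ℝ} (hl : l < 0)
    (hg : HasDerivAt g d 0) (hmin : ∀ ε, l ≤ ε → ε ≤ 0 → g 0 ≤ g ε) : d ≤ 0 := by
  by_contra h
  push_neg at h
  have hs := hasDerivAt_iff_tendsto_slope.1 hg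
  have hpos : ∀ᶠ x in nhdsWithin 0 {(0:ℝ)}ᶜ, 0 < slope g 0 x :=
    hs.eventually (eventually_gt_nhds h)
  have hsub : nhdsWithin (0:ℝ) (Set.Iio 0) ≤ nhdsWithin 0 {(0:ℝ)}ᶜ :=
    nhdsWithin_mono 0 (fun x hx => ne_of_lt hx)
  have hpos' : ∀ᶠ x in nhdsWithin (0:ℝ) (Set.Iio 0), 0 < slope g 0 x := hpos.filter_mono hsub
  have hgt : ∀ᶠ x in nhdsWithin (0:ℝ) (Set.Iio 0), l < x :=
    eventually_nhdsWithin_of_eventually_nhds (eventually_gt_nhds hl)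
  have hneg : ∀ᶠ x in nhdsWithin (0:ℝ) (Set.Iio 0), x < 0 :=
    eventually_mem_nhdsWithin.mono (fun x hx => hx)
  obtain ⟨x, h1, h2, h3⟩ := (hpos'.and (hgt.and hneg)).exists
  have hge := hmin x h2.le h3.le
  rw [slope_def_field, div_pos_iff] at h1
  rcases h1 with ⟨ha, hb⟩ | ⟨ha, hb⟩
  · simp only [sub_zero] at hb; linarith
  · simp only [sub_zero] at hb; nlinarith [sub_nonneg.2 hge]

lemma deriv_nonneg_of_min_rightCK {g : ℝ → ℝ} {d r : ℝ} (hr : 0 < r)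
    (hg : HasDerivAt g d 0) (hmin : ∀ ε, 0 ≤ ε → ε ≤ r → g 0 ≤ g ε) : 0 ≤ d := by
  have hg' : HasDerivAt (fun x => g (-x)) (-d) 0 := by
    have h0 : HasDerivAt g d (-(0:ℝ)) := by simpa using hg
    have := h0.comp 0 (hasDerivAt_neg (0:ℝ))
    simpa [Function.comp_def] using this
  have : -d ≤ 0 := by
    apply deriv_nonpos_of_min_leftCK (l := -r) (by linarith) hg'
    intro ε h1 h2
    simpa using hmin (-ε) (by linarith) (by linarith)
  linarith

/-- Net outflow at a node. -/
noncomputable def netFlowCK {V : Type*} [DecidableEq V] (A : Finset (V × V))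
    (β : V × V → ℝ) (π : V → ℝ) (v : V) : ℝ :=
  (∑ a ∈ A.filter (fun a => a.1 = v), inducedFlow β π a) -
    (∑ a ∈ A.filter (fun a => a.2 = v), inducedFlow β π a)

/-- Dirichlet energy of a potential. -/
noncomputable def energyCK {V : Type*} [DecidableEq V] (A : Finset (V × V))
    (β : V × V → ℝ) (π : V → ℝ) : ℝ :=
  ∑ a ∈ A, (2/3) * (|π a.1 - π a.2| * Real.sqrt |π a.1 - π a.2|) / Real.sqrt (β a)

/-- Abel-type summation by parts for flows on a digraph. -/
lemma abel_sumCK {V : Type*} [Fintype V] [DecidableEq V] (A : Finset (V × V))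
    (f : V × V → ℝ) (σ : V → ℝ) :
    ∑ a ∈ A, f a * (σ a.1 - σ a.2) =
      ∑ v : V, σ v * ((∑ a ∈ A.filter (fun a => a.1 = v), f a) -
        (∑ a ∈ A.filter (fun a => a.2 = v), f a)) := by
  have h1 : ∀ w : V, σ w * (∑ a ∈ A.filter (fun a => a.1 = w), f a) =
      ∑ a ∈ A, (if a.1 = w then σ w * f a else 0) := by
    intro w
    rw [Finset.mul_sum, Finset.sum_filter]
  have h2 : ∀ w : V, σ w * (∑ a ∈ A.filter (fun a => a.2 = w), f a) =
      ∑ a ∈ A, (if a.2 = w then σ w * f a else 0) := by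
    intro w
    rw [Finset.mul_sum, Finset.sum_filter]
  calc ∑ a ∈ A, f a * (σ a.1 - σ a.2)
      = ∑ a ∈ A, (σ a.1 * f a - σ a.2 * f a) := by apply sum_congr rfl; intros; ring
    _ = ∑ a ∈ A, ((∑ v : V, if a.1 = v then σ v * f a else 0) -
          (∑ v : V, if a.2 = v then σ v * f a else 0)) := by
        apply sum_congr rfl; intro a _
        rw [Finset.sum_ite_eq (Finset.univ) a.1 (fun v => σ v * f a),
            Finset.sum_ite_eq (Finset.univ) a.2 (fun v => σ v * f a)]
        simp
    _ = (∑ a ∈ A, ∑ v : V, if a.1 = v then σ v * f a else 0) -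
          ∑ a ∈ A, ∑ v : V, if a.2 = v then σ v * f a else 0 := by
        rw [Finset.sum_sub_distrib]
    _ = (∑ v : V, ∑ a ∈ A, if a.1 = v then σ v * f a else 0) -
          ∑ v : V, ∑ a ∈ A, if a.2 = v then σ v * f a else 0 := by
        rw [Finset.sum_comm, Finset.sum_comm (s := A)]
    _ = ∑ v : V, σ v * ((∑ a ∈ A.filter (fun a => a.1 = v), f a) -
        (∑ a ∈ A.filter (fun a => a.2 = v), f a)) := by
        rw [← Finset.sum_sub_distrib]
        apply sum_congr rfl; intro v _
        rw [mul_sub, h1 v, h2 v]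

lemma flow_mul_deltaCK {V : Type*} (β : V × V → ℝ) (π : V → ℝ) (a : V × V) :
    inducedFlow β π a * (π a.1 - π a.2) =
      |π a.1 - π a.2| * Real.sqrt |π a.1 - π a.2| / Real.sqrt (β a) := by
  unfold inducedFlow
  set Δ := π a.1 - π a.2
  rw [Real.sqrt_div (abs_nonneg Δ)]
  have hsign : Real.sign Δ * Δ = |Δ| := by
    rcases lt_trichotomy Δ 0 with h | h | h
    · rw [Real.sign_of_neg h, abs_of_neg h]; ring
    · simp [h]
    · rw [Real.sign_of_pos h, abs_of_pos h]; ring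
  calc Real.sign Δ * (Real.sqrt |Δ| / Real.sqrt (β a)) * Δ
      = (Real.sign Δ * Δ) * Real.sqrt |Δ| / Real.sqrt (β a) := by ring
    _ = |Δ| * Real.sqrt |Δ| / Real.sqrt (β a) := by rw [hsign]

lemma flow_cubeCK {V : Type*} (β : V × V → ℝ) (π : V → ℝ) (a : V × V) (hb : 0 < β a) :
    β a * |inducedFlow β π a|^3 = inducedFlow β π a * (π a.1 - π a.2) := by
  rw [flow_mul_deltaCK β π a]
  unfold inducedFlow
  set Δ := π a.1 - π a.2
  rcases eq_or_ne Δ 0 with h | h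
  · simp [h]
  · have hsa : |Real.sign Δ| = 1 := by
      rcases lt_or_gt_of_ne h with hlt | hgt
      · rw [Real.sign_of_neg hlt]; norm_num
      · rw [Real.sign_of_pos hgt]; norm_num
    have hnn : 0 ≤ |Δ| / β a := by positivity
    rw [abs_mul, hsa, one_mul, abs_of_nonneg (Real.sqrt_nonneg _)]
    have hcube : Real.sqrt (|Δ| / β a) ^ 3 = (|Δ| / β a) * Real.sqrt (|Δ| / β a) := by
      rw [pow_succ, Real.sq_sqrt hnn]
    rw [hcube, Real.sqrt_div (abs_nonneg Δ)]
    field_simp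

lemma hasDerivAt_energy_updateCK {V : Type*} [Fintype V] [DecidableEq V]
    (A : Finset (V × V)) (β : V × V → ℝ) (π : V → ℝ) (v : V) :
    HasDerivAt (fun ε : ℝ => energyCK A β (Function.update π v (π v + ε)))
      (netFlowCK A β π v) 0 := by
  have hupd : ∀ (ε : ℝ) (u : V), Function.update π v (π v + ε) u
      = π u + (if u = v then 1 else 0) * ε := by
    intro ε u
    by_cases h : u = v
    · subst h; simp
    · simp [Function.update_of_ne h, h]
  have harc : ∀ a ∈ A, HasDerivAt
      (fun ε : ℝ => (2/3) * (|Function.update π v (π v + ε) a.1 -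
          Function.update π v (π v + ε) a.2| *
          Real.sqrt |Function.update π v (π v + ε) a.1 - Function.update π v (π v + ε) a.2|) /
          Real.sqrt (β a))
      (((if a.1 = v then 1 else 0) - (if a.2 = v then 1 else 0)) * inducedFlow β π a) 0 := by
    intro a ha
    set d : ℝ := π a.1 - π a.2 with hd
    set k : ℝ := (if a.1 = v then 1 else 0) - (if a.2 = v then 1 else 0) with hk
    have hfun : (fun ε : ℝ => (2/3) * (|Function.update π v (π v + ε) a.1 -
          Function.update π v (π v + ε) a.2| *
          Real.sqrt |Function.update π v (π v + ε) a.1 - Function.update π v (π v + ε) a.2|) /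
          Real.sqrt (β a))
        = fun ε : ℝ => (2/3) * (|d + k * ε| * Real.sqrt |d + k * ε|) / Real.sqrt (β a) := by
      funext ε
      rw [hupd ε a.1, hupd ε a.2]
      have : π a.1 + (if a.1 = v then 1 else 0) * ε - (π a.2 + (if a.2 = v then 1 else 0) * ε)
          = d + k * ε := by rw [hd, hk]; ring
      rw [this]
    rw [hfun]
    have haff : HasDerivAt (fun ε : ℝ => d + k * ε) k 0 := by
      simpa using ((hasDerivAt_id (0:ℝ)).const_mul k).const_add d
    have hcomp := (hasDerivAt_psiCK (d + k * 0)).comp 0 haff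
    have hval : d + k * 0 = d := by ring
    rw [hval] at hcomp
    have hder0 := (hcomp.const_mul (2/3 : ℝ)).div_const (Real.sqrt (β a))
    have hder : HasDerivAt
        (fun ε : ℝ => (2/3) * (|d + k * ε| * Real.sqrt |d + k * ε|) / Real.sqrt (β a))
        (2/3 * (3/2 * (Real.sign d * Real.sqrt |d|) * k) / Real.sqrt (β a)) 0 := by
      simpa [Function.comp] using hder0
    have hval2 : k * inducedFlow β π a
        = 2/3 * (3/2 * (Real.sign d * Real.sqrt |d|) * k) / Real.sqrt (β a) := by
      unfold inducedFlow
      rw [← hd, Real.sqrt_div (abs_nonneg d)]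
      field_simp
    rw [hval2]
    exact hder
  have hsum := HasDerivAt.fun_sum harc
  have hflow : ∑ a ∈ A, ((if a.1 = v then (1:ℝ) else 0) - (if a.2 = v then 1 else 0)) *
      inducedFlow β π a = netFlowCK A β π v := by
    unfold netFlowCK
    rw [Finset.sum_filter, Finset.sum_filter, ← Finset.sum_sub_distrib]
    apply sum_congr rfl
    intro a _
    by_cases h1 : a.1 = v <;> by_cases h2 : a.2 = v <;> simp [h1, h2]
  rw [← hflow]
  exact hsum

lemma sign_nonneg_of_nonnegCK {x : ℝ} (h : 0 ≤ x) : 0 ≤ Real.sign x := by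
  rcases h.eq_or_lt with h' | h'
  · simp [← h']
  · rw [Real.sign_of_pos h']; norm_num

lemma sign_nonpos_of_nonposCK {x : ℝ} (h : x ≤ 0) : Real.sign x ≤ 0 := by
  rcases h.eq_or_lt with h' | h'
  · simp [h']
  · rw [Real.sign_of_neg h']; norm_num

lemma netFlow_nonneg_at_topCK {V : Type*} [DecidableEq V] (A : Finset (V × V))
    (β : V × V → ℝ) (π : V → ℝ) (v : V) (h : ∀ u, π u ≤ π v) :
    0 ≤ netFlowCK A β π v := by
  unfold netFlowCK
  apply sub_nonneg.2
  calc ∑ a ∈ A.filter (fun a => a.2 = v), inducedFlow β π a ≤ 0 := by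
        apply Finset.sum_nonpos
        intro a ha
        have ha2 : a.2 = v := by simpa using (Finset.mem_filter.1 ha).2
        have : π a.1 - π a.2 ≤ 0 := by rw [ha2]; linarith [h a.1]
        exact mul_nonpos_of_nonpos_of_nonneg (sign_nonpos_of_nonposCK this) (Real.sqrt_nonneg _)
    _ ≤ ∑ a ∈ A.filter (fun a => a.1 = v), inducedFlow β π a := by
        apply Finset.sum_nonneg
        intro a ha
        have ha1 : a.1 = v := by simpa using (Finset.mem_filter.1 ha).2
        have : 0 ≤ π a.1 - π a.2 := by rw [ha1]; linarith [h a.2]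
        exact mul_nonneg (sign_nonneg_of_nonnegCK this) (Real.sqrt_nonneg _)

lemma netFlow_nonpos_at_botCK {V : Type*} [DecidableEq V] (A : Finset (V × V))
    (β : V × V → ℝ) (π : V → ℝ) (v : V) (h : ∀ u, π v ≤ π u) :
    netFlowCK A β π v ≤ 0 := by
  unfold netFlowCK
  apply sub_nonpos.2
  calc ∑ a ∈ A.filter (fun a => a.1 = v), inducedFlow β π a ≤ 0 := by
        apply Finset.sum_nonpos
        intro a ha
        have ha1 : a.1 = v := by simpa using (Finset.mem_filter.1 ha).2
        have : π a.1 - π a.2 ≤ 0 := by rw [ha1]; linarith [h a.2]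
        exact mul_nonpos_of_nonpos_of_nonneg (sign_nonpos_of_nonposCK this) (Real.sqrt_nonneg _)
    _ ≤ ∑ a ∈ A.filter (fun a => a.2 = v), inducedFlow β π a := by
        apply Finset.sum_nonneg
        intro a ha
        have ha2 : a.2 = v := by simpa using (Finset.mem_filter.1 ha).2
        have : 0 ≤ π a.1 - π a.2 := by rw [ha2]; linarith [h a.1]
        exact mul_nonneg (sign_nonneg_of_nonnegCK this) (Real.sqrt_nonneg _)

lemma conserved_at_minCK {V : Type*} [Fintype V] [DecidableEq V]
    (A : Finset (V × V)) (β : V × V → ℝ) {s t v : V} {πmin πmax : ℝ}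
    (hlt : πmin < πmax) (hvs : v ≠ s) (hvt : v ≠ t) (pih : V → ℝ)
    (hbox : ∀ u, πmin ≤ pih u ∧ pih u ≤ πmax)
    (hmin : ∀ π : V → ℝ, (∀ u, πmin ≤ π u ∧ π u ≤ πmax) → π s = pih s → π t = pih t →
      energyCK A β pih ≤ energyCK A β π) :
    netFlowCK A β pih v = 0 := by
  set g : ℝ → ℝ := fun ε => energyCK A β (Function.update pih v (pih v + ε)) with hg
  have hupd0 : Function.update pih v (pih v + 0) = pih := by
    funext u
    by_cases h : u = v
    · subst h; simp
    · simp [Function.update_of_ne h]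
  have hg0 : g 0 = energyCK A β pih := by
    show energyCK A β (Function.update pih v (pih v + 0)) = energyCK A β pih
    rw [hupd0]
  have hder : HasDerivAt g (netFlowCK A β pih v) 0 := hasDerivAt_energy_updateCK A β pih v
  have hfeas : ∀ ε : ℝ, πmin - pih v ≤ ε → ε ≤ πmax - pih v → g 0 ≤ g ε := by
    intro ε h1 h2
    rw [hg0, hg]
    apply hmin
    · intro u
      by_cases h : u = v
      · subst h; simp only [Function.update_self]; constructor <;> linarith
      · rw [Function.update_of_ne h]; exact hbox u
    · rw [Function.update_of_ne (Ne.symm hvs)]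
    · rw [Function.update_of_ne (Ne.symm hvt)]
  rcases (hbox v).2.eq_or_lt with htop | htop
  · have h1 : netFlowCK A β pih v ≤ 0 := by
      apply deriv_nonpos_of_min_leftCK (l := πmin - πmax) (by linarith) hder
      intro ε hε1 hε2
      exact hfeas ε (by rw [htop]; exact hε1) (by rw [htop]; linarith)
    have h2 : 0 ≤ netFlowCK A β pih v :=
      netFlow_nonneg_at_topCK A β pih v (fun u => by rw [htop]; exact (hbox u).2)
    linarith
  · rcases (hbox v).1.eq_or_lt with hbot | hbot
    · have h1 : 0 ≤ netFlowCK A β pih v := by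
        apply deriv_nonneg_of_min_rightCK (r := πmax - pih v) (by linarith) hder
        intro ε hε1 hε2
        exact hfeas ε (by rw [← hbot]; linarith) hε2
      have h2 : netFlowCK A β pih v ≤ 0 :=
        netFlow_nonpos_at_botCK A β pih v (fun u => by rw [← hbot]; exact (hbox u).1)
      linarith
    · have hloc : IsLocalMin g 0 := by
        have hIcc : Set.Icc (πmin - pih v) (πmax - pih v) ∈ nhds (0:ℝ) :=
          Icc_mem_nhds (by linarith) (by linarith)
        rw [IsLocalMin, IsMinFilter]
        filter_upwards [hIcc] with ε hε
        exact hfeas ε hε.1 hε.2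
      exact hloc.hasDerivAt_eq_zero hder

lemma exists_energy_minCK {V : Type*} [Fintype V] [DecidableEq V]
    (A : Finset (V × V)) (β : V × V → ℝ) (s t : V) (hst : s ≠ t) {πmin πmax : ℝ}
    (hπ : πmin ≤ πmax) :
    ∃ pih : V → ℝ, ((∀ u, πmin ≤ pih u ∧ pih u ≤ πmax) ∧ pih s = πmax ∧ pih t = πmin) ∧
      ∀ π : V → ℝ, ((∀ u, πmin ≤ π u ∧ π u ≤ πmax) ∧ π s = πmax ∧ π t = πmin) →
        energyCK A β pih ≤ energyCK A β π := by
  set K : Set (V → ℝ) :=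
    {π | (∀ u, πmin ≤ π u ∧ π u ≤ πmax) ∧ π s = πmax ∧ π t = πmin} with hK
  have hKsub : K ⊆ Set.pi Set.univ (fun _ : V => Set.Icc πmin πmax) := by
    intro π hπ' u _
    exact ⟨(hπ'.1 u).1, (hπ'.1 u).2⟩
  have hcomp : IsCompact (Set.pi Set.univ (fun _ : V => Set.Icc πmin πmax)) :=
    isCompact_univ_pi (fun _ => isCompact_Icc)
  have hclosed : IsClosed K := by
    have h1 : IsClosed {π : V → ℝ | ∀ u, πmin ≤ π u ∧ π u ≤ πmax} := by
      have : {π : V → ℝ | ∀ u, πmin ≤ π u ∧ π u ≤ πmax}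
          = ⋂ u : V, {π : V → ℝ | π u ∈ Set.Icc πmin πmax} := by
        ext π; simp [Set.mem_Icc, Set.mem_iInter]
      rw [this]
      exact isClosed_iInter (fun u => (isClosed_Icc).preimage (continuous_apply u))
    have h2 : IsClosed {π : V → ℝ | π s = πmax} :=
      isClosed_eq (continuous_apply s) continuous_const
    have h3 : IsClosed {π : V → ℝ | π t = πmin} :=
      isClosed_eq (continuous_apply t) continuous_const
    have : K = {π : V → ℝ | ∀ u, πmin ≤ π u ∧ π u ≤ πmax} ∩
        ({π : V → ℝ | π s = πmax} ∩ {π : V → ℝ | π t = πmin}) := by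
      ext π; simp [hK, Set.mem_inter_iff, and_assoc]
    rw [this]
    exact h1.inter (h2.inter h3)
  have hKcomp : IsCompact K := hcomp.of_isClosed_subset hclosed hKsub
  have hKne : K.Nonempty := by
    refine ⟨fun u => if u = s then πmax else πmin, ?_, ?_, ?_⟩
    · intro u
      by_cases h : u = s <;> simp [h, hπ]
    · simp
    · simp [hst.symm]
  have hcont : Continuous (energyCK A β) := by
    apply continuous_finset_sum
    intro a _
    apply Continuous.div_const
    apply Continuous.mul continuous_const
    have habs : Continuous (fun π : V → ℝ => |π a.1 - π a.2|) :=
      ((continuous_apply a.1).sub (continuous_apply a.2)).abs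
    exact habs.mul (Real.continuous_sqrt.comp habs)
  obtain ⟨pih, hmem, hmin⟩ := hKcomp.exists_isMinOn hKne hcont.continuousOn
  exact ⟨pih, hmem, fun π hπ' => hmin hπ'⟩

/-- Summation of a potential against s-t supply/demand values. -/
lemma sum_pot_mul_bCK {V : Type*} [Fintype V] [DecidableEq V] {s t : V} (hst : s ≠ t)
    (σ : V → ℝ) (q : ℝ) :
    ∑ v : V, σ v * (if v = s then q else if v = t then -q else 0) = σ s * q - σ t * q := by
  have hterm : ∀ v : V, σ v * (if v = s then q else if v = t then -q else 0)
      = (if v = s then σ v * q else 0) + (if v = t then -(σ v * q) else 0) := by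
    intro v
    by_cases h1 : v = s
    · subst h1
      rw [if_pos rfl, if_pos rfl, if_neg hst]
      ring
    · by_cases h2 : v = t
      · subst h2
        rw [if_neg h1, if_pos rfl, if_neg h1, if_pos rfl]
        ring
      · rw [if_neg h1, if_neg h2, if_neg h1, if_neg h2]
        ring
  rw [Finset.sum_congr rfl (fun v _ => hterm v), Finset.sum_add_distrib]
  rw [Finset.sum_ite_eq' Finset.univ s (fun v => σ v * q),
      Finset.sum_ite_eq' Finset.univ t (fun v => -(σ v * q))]
  simp
  ring

/-- Key comparison: any feasible β'-flow value is at most the value of a conserving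
potential with extreme boundary values for β. -/
lemma value_leCK {V : Type*} [Fintype V] [DecidableEq V]
    (A : Finset (V × V)) {s t : V} (hst : s ≠ t) {πmin πmax : ℝ} (hlt : πmin < πmax)
    (β β' : V × V → ℝ) (hβ : ∀ a ∈ A, 0 < β a) (hββ' : ∀ a ∈ A, β a ≤ β' a)
    (pih : V → ℝ) (hbox : ∀ u, πmin ≤ pih u ∧ pih u ≤ πmax)
    (hs : pih s = πmax) (ht : pih t = πmin)
    (qh : ℝ)
    (hch : ∀ v : V, netFlowCK A β pih v = if v = s then qh else if v = t then -qh else 0)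
    (π' : V → ℝ) (hbox' : ∀ u, πmin ≤ π' u ∧ π' u ≤ πmax)
    (q' : ℝ)
    (hc' : ∀ v : V, netFlowCK A β' π' v = if v = s then q' else if v = t then -q' else 0) :
    q' ≤ qh := by
  have hD : 0 < πmax - πmin := by linarith
  -- qh identity
  have habel1 : ∑ a ∈ A, inducedFlow β pih a * (pih a.1 - pih a.2) = qh * (πmax - πmin) := by
    rw [abel_sumCK A (inducedFlow β pih) pih]
    have : ∀ v : V, pih v * ((∑ a ∈ A.filter (fun a => a.1 = v), inducedFlow β pih a) -
        (∑ a ∈ A.filter (fun a => a.2 = v), inducedFlow β pih a))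
        = pih v * (if v = s then qh else if v = t then -qh else 0) := by
      intro v
      rw [← hch v]
      rfl
    rw [Finset.sum_congr rfl (fun v _ => this v), sum_pot_mul_bCK hst pih qh, hs, ht]
    ring
  have hqh_nonneg : 0 ≤ qh := by
    have hsum : 0 ≤ ∑ a ∈ A, inducedFlow β pih a * (pih a.1 - pih a.2) := by
      apply Finset.sum_nonneg
      intro a ha
      rw [flow_mul_deltaCK]
      positivity
    nlinarith [habel1]
  rcases le_or_gt q' 0 with hq' | hq'
  · linarith
  -- main chain
  have habel2 : ∑ a ∈ A, inducedFlow β' π' a * (pih a.1 - pih a.2) = q' * (πmax - πmin) := by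
    rw [abel_sumCK A (inducedFlow β' π') pih]
    have : ∀ v : V, pih v * ((∑ a ∈ A.filter (fun a => a.1 = v), inducedFlow β' π' a) -
        (∑ a ∈ A.filter (fun a => a.2 = v), inducedFlow β' π' a))
        = pih v * (if v = s then q' else if v = t then -q' else 0) := by
      intro v
      rw [← hc' v]
      rfl
    rw [Finset.sum_congr rfl (fun v _ => this v), sum_pot_mul_bCK hst pih q', hs, ht]
    ring
  have habel3 : ∑ a ∈ A, inducedFlow β' π' a * (π' a.1 - π' a.2) = q' * (π' s - π' t) := by
    rw [abel_sumCK A (inducedFlow β' π') π']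
    have : ∀ v : V, π' v * ((∑ a ∈ A.filter (fun a => a.1 = v), inducedFlow β' π' a) -
        (∑ a ∈ A.filter (fun a => a.2 = v), inducedFlow β' π' a))
        = π' v * (if v = s then q' else if v = t then -q' else 0) := by
      intro v
      rw [← hc' v]
      rfl
    rw [Finset.sum_congr rfl (fun v _ => this v), sum_pot_mul_bCK hst π' q']
    ring
  -- per-arc Young inequality
  have harc : ∀ a ∈ A, inducedFlow β' π' a * (pih a.1 - pih a.2) ≤
      (2/3) * (inducedFlow β pih a * (pih a.1 - pih a.2)) +
      (1/3) * (inducedFlow β' π' a * (π' a.1 - π' a.2)) := by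
    intro a ha
    have hba := hβ a ha
    have hba' := hββ' a ha
    have hb'pos : 0 < β' a := lt_of_lt_of_le hba hba'
    rw [flow_mul_deltaCK β pih a, ← flow_cubeCK β' π' a hb'pos]
    calc inducedFlow β' π' a * (pih a.1 - pih a.2)
        ≤ |inducedFlow β' π' a| * |pih a.1 - pih a.2| := by
          rw [← abs_mul]; exact le_abs_self _
      _ ≤ (2/3) * (|pih a.1 - pih a.2| * Real.sqrt |pih a.1 - pih a.2| / Real.sqrt (β a)) +
          (1/3) * (β' a * |inducedFlow β' π' a|^3) := by
          exact young3CK' (abs_nonneg _) (abs_nonneg _) hba hba'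
  have hsumle : q' * (πmax - πmin) ≤ (2/3) * (qh * (πmax - πmin)) + (1/3) * (q' * (π' s - π' t)) := by
    calc q' * (πmax - πmin) = ∑ a ∈ A, inducedFlow β' π' a * (pih a.1 - pih a.2) := habel2.symm
      _ ≤ ∑ a ∈ A, ((2/3) * (inducedFlow β pih a * (pih a.1 - pih a.2)) +
          (1/3) * (inducedFlow β' π' a * (π' a.1 - π' a.2))) := Finset.sum_le_sum harc
      _ = (2/3) * (∑ a ∈ A, inducedFlow β pih a * (pih a.1 - pih a.2)) +
          (1/3) * (∑ a ∈ A, inducedFlow β' π' a * (π' a.1 - π' a.2)) := by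
          rw [Finset.sum_add_distrib, Finset.mul_sum, Finset.mul_sum]
      _ = (2/3) * (qh * (πmax - πmin)) + (1/3) * (q' * (π' s - π' t)) := by
          rw [habel1, habel3]
  have hbd : q' * (π' s - π' t) ≤ q' * (πmax - πmin) := by
    have h1 : π' s - π' t ≤ πmax - πmin := by
      have := (hbox' s).2
      have := (hbox' t).1
      linarith
    exact mul_le_mul_of_nonneg_left h1 hq'.le
  nlinarith [hsumle, hbd, hD]

end CalvertKeadyAux

/-- Increasing arc resistances cannot increase the value of a maximal feasible
stationary gas s-t-flow (Calvert–Keady; Theorem 1 of the paper). -/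
theorem max_st_flow_antitone_in_resistances {V : Type*} [Fintype V] [DecidableEq V]
    (A : Finset (V × V)) (s t : V) (hst : s ≠ t) (πmin πmax : ℝ) (hπ : πmin ≤ πmax)
    (β β' : V × V → ℝ) (hβ : ∀ a ∈ A, 0 < β a) (hββ' : ∀ a ∈ A, β a ≤ β' a) :
    sSup (stFlowValues A β' s t πmin πmax) ≤ sSup (stFlowValues A β s t πmin πmax) := by
  classical
  -- membership via net flows
  have hmem_iff : ∀ (γ : V × V → ℝ) (q : ℝ), q ∈ stFlowValues A γ s t πmin πmax ↔
      ∃ π : V → ℝ, (∀ v : V, πmin ≤ π v ∧ π v ≤ πmax) ∧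
        ∀ v : V, netFlowCK A γ π v = if v = s then q else if v = t then -q else 0 := by
    intro γ q
    rfl
  -- 0 is always a feasible value (constant potential)
  have hzero : ∀ γ : V × V → ℝ, (0:ℝ) ∈ stFlowValues A γ s t πmin πmax := by
    intro γ
    refine ⟨fun _ => πmin, fun v => ⟨le_refl _, hπ⟩, ?_⟩
    intro v
    have : ∀ a ∈ A, inducedFlow γ (fun _ => πmin) a = 0 := by
      intro a _
      unfold inducedFlow
      simp
    rw [Finset.sum_eq_zero (fun a ha => this a (Finset.mem_filter.1 ha).1),
        Finset.sum_eq_zero (fun a ha => this a (Finset.mem_filter.1 ha).1)]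
    by_cases h1 : v = s <;> by_cases h2 : v = t <;> simp [h1, h2]
  rcases eq_or_lt_of_le hπ with heq | hlt
  · -- degenerate case: πmin = πmax, both value sets are {0}
    have hsing : ∀ γ : V × V → ℝ, stFlowValues A γ s t πmin πmax = {0} := by
      intro γ
      apply Set.eq_singleton_iff_unique_mem.2
      refine ⟨hzero γ, ?_⟩
      rintro q ⟨π, hbox, hcons⟩
      have hconst : ∀ v, π v = πmin := by
        intro v
        have h2 := (hbox v).2
        rw [← heq] at h2
        exact le_antisymm h2 (hbox v).1
      have hflow : ∀ a ∈ A, inducedFlow γ π a = 0 := by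
        intro a _
        unfold inducedFlow
        rw [hconst a.1, hconst a.2]
        simp
      have := hcons s
      rw [Finset.sum_eq_zero (fun a ha => hflow a (Finset.mem_filter.1 ha).1),
          Finset.sum_eq_zero (fun a ha => hflow a (Finset.mem_filter.1 ha).1),
          if_pos rfl] at this
      linarith
    rw [hsing β, hsing β']
  · -- main case: πmin < πmax
    obtain ⟨pih, ⟨hbox, hsv, htv⟩, hmin⟩ := exists_energy_minCK A β s t hst hπ
    set qh : ℝ := netFlowCK A β pih s with hqh
    -- interior conservation
    have hinterior : ∀ v : V, v ≠ s → v ≠ t → netFlowCK A β pih v = 0 := by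
      intro v hvs hvt
      apply conserved_at_minCK A β hlt hvs hvt pih hbox
      intro π hπbox hπs hπt
      exact hmin π ⟨hπbox, by rw [hπs, hsv], by rw [hπt, htv]⟩
    -- total conservation gives value -qh at t
    have hsum0 : ∑ v : V, netFlowCK A β pih v = 0 := by
      have := abel_sumCK A (inducedFlow β pih) (fun _ => 1)
      simp only [sub_self, mul_zero, one_mul] at this
      rw [Finset.sum_eq_zero (fun a _ => by ring)] at this
      exact this.symm
    have htval : netFlowCK A β pih t = -qh := by
      have hsplit : ∑ v : V, netFlowCK A β pih v
          = netFlowCK A β pih s + (netFlowCK A β pih t +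
            ∑ v ∈ (Finset.univ.erase s).erase t, netFlowCK A β pih v) := by
        rw [Finset.add_sum_erase _ _ (Finset.mem_erase.2 ⟨hst.symm, Finset.mem_univ t⟩),
            Finset.add_sum_erase _ _ (Finset.mem_univ s)]
      have hrest : ∑ v ∈ (Finset.univ.erase s).erase t, netFlowCK A β pih v = 0 := by
        apply Finset.sum_eq_zero
        intro v hv
        have hv1 := (Finset.mem_erase.1 hv).1
        have hv2 := (Finset.mem_erase.1 (Finset.mem_erase.1 hv).2).1
        exact hinterior v hv2 hv1
      rw [hsplit, hrest] at hsum0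
      rw [hqh]
      linarith
    have hch : ∀ v : V, netFlowCK A β pih v = if v = s then qh else if v = t then -qh else 0 := by
      intro v
      by_cases h1 : v = s
      · subst h1; rw [if_pos rfl]
      · by_cases h2 : v = t
        · subst h2; rw [if_neg h1, if_pos rfl]; exact htval
        · rw [if_neg h1, if_neg h2]; exact hinterior v h1 h2
    have hqh_mem : qh ∈ stFlowValues A β s t πmin πmax :=
      (hmem_iff β qh).2 ⟨pih, hbox, hch⟩
    -- every β-feasible value is at most qh
    have hboundS : ∀ q ∈ stFlowValues A β s t πmin πmax, q ≤ qh := by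
      intro q hq
      obtain ⟨π', hbox', hc'⟩ := (hmem_iff β q).1 hq
      exact value_leCK A hst hlt β β hβ (fun a _ => le_refl _) pih hbox hsv htv qh hch π' hbox' q hc'
    have hboundS' : ∀ q ∈ stFlowValues A β' s t πmin πmax, q ≤ qh := by
      intro q hq
      obtain ⟨π', hbox', hc'⟩ := (hmem_iff β' q).1 hq
      exact value_leCK A hst hlt β β' hβ hββ' pih hbox hsv htv qh hch π' hbox' q hc'
    calc sSup (stFlowValues A β' s t πmin πmax) ≤ qh :=
          csSup_le ⟨0, hzero β'⟩ hboundS'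
      _ ≤ sSup (stFlowValues A β s t πmin πmax) :=
          le_csSup ⟨qh, hboundS⟩ hqh_mem
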